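/- Positive maximum principle for the coupled space-time nonlocal operator (conservative case): let E be a locally compact separable metric space, let (p_s)_{s>0} be a family of probability kernels from E to E such that for every x ∈ E and every bounded continuous g : E → ℝ the map s ↦ ∫_E g(y) p_s(x,dy) is continuous on (0,∞), and let ν be a Borel measure on (0,∞) with ν([t,∞)) < ∞ and ν((t,∞)) > 0 for every t > 0. Let f : E × [0,∞) → ℝ be bounded and Borel measurable with f(·,0) continuous on E, and let (x⋆,t⋆) ∈ E × (0,∞) be such that f(x⋆,t⋆) ≥ f(x,t) for all (x,t) ∈ E × (0,t⋆] and f(x⋆,t⋆) > f(x,0) for all x ∈ E. If the function s ↦ ∫_E f(y,(t⋆−s)∨0) p_s(x⋆,dy) − f(x⋆,t⋆) is ν-integrable on (0,∞), then ∫₀^∞ (∫_E f(y,(t⋆−s)∨0) p_s(x⋆,dy) − f(x⋆,t⋆)) ν(ds) < 0. -/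
import Mathlib


open MeasureTheory Set Filter Topology ProbabilityTheory
open scoped BoundedContinuousFunction

/-- Positive maximum principle for the coupled space-time nonlocal operator (conservative
case): if `(p_s)_{s>0}` are probability kernels on a locally compact separable metric space
which are weakly continuous in `s`, `ν` has finite positive tails, `f` is bounded measurable
with continuous initial section, and `(xstar, tstar)` is a maximum point of `f` over
`E × (0,tstar]` which strictly dominates `f(·,0)`, then
`∫₀^∞ (∫ f(y,(tstar-s)∨0) p_s(xstar,dy) - f(xstar,tstar)) ν(ds) < 0`. -/
theorem positive_maximum_principle_coupled
    {E : Type*} [MetricSpace E] [TopologicalSpace.SeparableSpace E] [LocallyCompactSpace E]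
    [MeasurableSpace E] [BorelSpace E]
    (p : ℝ → Kernel E E)
    (hmk : ∀ s : ℝ, 0 < s → IsMarkovKernel (p s))
    (hcont : ∀ (x : E) (g : E →ᵇ ℝ),
      ContinuousOn (fun s : ℝ => ∫ y, g y ∂(p s x)) (Set.Ioi 0))
    (ν : Measure ℝ)
    (hνfin : ∀ t : ℝ, 0 < t → ν (Set.Ici t) < ⊤)
    (hνpos : ∀ t : ℝ, 0 < t → 0 < ν (Set.Ioi t))
    (f : E × ℝ → ℝ) (hfm : Measurable f) (M : ℝ) (hfb : ∀ q : E × ℝ, |f q| ≤ M)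
    (hf0 : Continuous fun x : E => f (x, 0))
    (xstar : E) (tstar : ℝ) (htstar : 0 < tstar)
    (hmax : ∀ (x : E) (t : ℝ), 0 < t → t ≤ tstar → f (x, t) ≤ f (xstar, tstar))
    (hstrict : ∀ x : E, f (x, 0) < f (xstar, tstar))
    (hint : IntegrableOn
      (fun s : ℝ => (∫ y, f (y, max (tstar - s) 0) ∂(p s xstar)) - f (xstar, tstar))
      (Set.Ioi 0) ν) :
    ∫ s in Set.Ioi (0 : ℝ),
      ((∫ y, f (y, max (tstar - s) 0) ∂(p s xstar)) - f (xstar, tstar)) ∂ν < 0 := by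
  set c := f (xstar, tstar) with hc
  set F : ℝ → ℝ := fun s => (∫ y, f (y, max (tstar - s) 0) ∂(p s xstar)) - c with hF
  have hmeas : ∀ t : ℝ, Measurable fun y : E => f (y, t) := fun t =>
    hfm.comp (measurable_id.prodMk measurable_const)
  have hintE : ∀ s t : ℝ, 0 < s → Integrable (fun y => f (y, t)) (p s xstar) := by
    intro s t hs
    haveI := hmk s hs
    exact (integrable_const M).mono' (hmeas t).aestronglyMeasurable
      (ae_of_all _ fun y => by simpa [Real.norm_eq_abs] using hfb (y, t))
  have hle : ∀ s ∈ Ioi (0 : ℝ), F s ≤ 0 := by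
    intro s hs
    haveI := hmk s hs
    have hpt : ∀ y, f (y, max (tstar - s) 0) ≤ c := by
      intro y
      rcases le_or_gt (tstar - s) 0 with h | h
      · rw [max_eq_right h]; exact (hstrict y).le
      · rw [max_eq_left h.le]
        exact hmax y _ h (by linarith [mem_Ioi.mp hs])
    have hmono := integral_mono (hintE s _ (mem_Ioi.mp hs)) (integrable_const c) hpt
    simp only [integral_const, measure_univ, ENNReal.toReal_one, one_smul] at hmono
    simpa [hF] using sub_nonpos.mpr hmono
  have hlt : ∀ s ∈ Ioi tstar, F s < 0 := by
    intro s hs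
    have hs0 : (0 : ℝ) < s := htstar.trans (mem_Ioi.mp hs)
    haveI := hmk s hs0
    have hmax0 : max (tstar - s) 0 = 0 := max_eq_right (by linarith [mem_Ioi.mp hs])
    have hnn : ∀ y : E, 0 ≤ c - f (y, 0) := fun y => by linarith [hstrict y]
    have hintsub : Integrable (fun y : E => c - f (y, 0)) (p s xstar) :=
      (integrable_const c).sub (hintE s 0 hs0)
    have hpos : 0 < ∫ y, (c - f (y, 0)) ∂(p s xstar) := by
      rw [integral_pos_iff_support_of_nonneg hnn hintsub]
      have hsupp : Function.support (fun y : E => c - f (y, 0)) = univ := by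
        ext y
        simp [Function.mem_support, sub_ne_zero, (hstrict y).ne']
      rw [hsupp, measure_univ]
      exact zero_lt_one
    have heq : ∫ y, (c - f (y, 0)) ∂(p s xstar) = c - ∫ y, f (y, 0) ∂(p s xstar) := by
      rw [integral_sub (integrable_const c) (hintE s 0 hs0)]
      simp
    rw [heq] at hpos
    simp only [hF, hmax0]
    linarith
  have hsplit : Ioc (0 : ℝ) tstar ∪ Ioi tstar = Ioi 0 := Ioc_union_Ioi_eq_Ioi htstar.le
  have hi1 : IntegrableOn F (Ioc 0 tstar) ν :=
    hint.mono_set (by rw [← hsplit]; exact subset_union_left)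
  have hi2 : IntegrableOn F (Ioi tstar) ν :=
    hint.mono_set (by rw [← hsplit]; exact subset_union_right)
  have hdisj : Disjoint (Ioc (0 : ℝ) tstar) (Ioi tstar) := Ioc_disjoint_Ioi le_rfl
  have hU := setIntegral_union hdisj measurableSet_Ioi hi1 hi2
  rw [← hsplit, hU]
  have h1 : ∫ s in Ioc (0 : ℝ) tstar, F s ∂ν ≤ 0 :=
    setIntegral_nonpos measurableSet_Ioc fun s hs => hle s (mem_Ioi.mpr hs.1)
  have h2 : ∫ s in Ioi tstar, F s ∂ν < 0 := by
    have hneg : 0 < ∫ s in Ioi tstar, -F s ∂ν := by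
      rw [setIntegral_pos_iff_support_of_nonneg_ae
        ((ae_restrict_iff' measurableSet_Ioi).mpr
          (ae_of_all _ fun s hs => neg_nonneg.mpr (hlt s hs).le)) hi2.neg]
      refine lt_of_lt_of_le (hνpos tstar htstar) (measure_mono fun s hs => ?_)
      exact ⟨(neg_pos.mpr (hlt s hs)).ne', hs⟩
    rw [integral_neg] at hneg
    linarith
  linarith
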